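/- Let λ be a nonempty Young diagram, let j ∈ B⁻(λ) and let i ∈ B⁺(λ) (so i ≠ j). Set D := d_{(λ ⊞ i) ⊟ j} if j ∈ B⁻(λ ⊞ i), and D := 0 otherwise. Then (1/(i−j)²) · (|λ|·d_{λ ⊞ i}·d_{λ ⊟ j}) / ((|λ|+1)·d_λ) = (|λ|·d_{λ ⊞ i}·d_{λ ⊟ j}) / ((|λ|+1)·d_λ) − D. -/

import Mathlib

/-- The content of a cell `(r, c)` (row `r`, column `c`) is `c - r`. -/
def content (x : ℕ × ℕ) : ℤ := (x.2 : ℤ) - (x.1 : ℤ)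

/-- `x` is an addable box of the Young diagram `μ`: `x ∉ μ` and `μ ∪ {x}` is again a
Young diagram. -/
def Addable (μ : YoungDiagram) (x : ℕ × ℕ) : Prop :=
  x ∉ μ ∧ IsLowerSet (↑(insert x μ.cells) : Set (ℕ × ℕ))

/-- `x` is a removable box of the Young diagram `μ`: `x ∈ μ` and `μ ∖ {x}` is again a
Young diagram. -/
def Removable (μ : YoungDiagram) (x : ℕ × ℕ) : Prop :=
  x ∈ μ ∧ IsLowerSet (↑(μ.cells.erase x) : Set (ℕ × ℕ))

/-- `B⁺(μ)`: the set of contents of addable boxes of `μ`. -/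
def Bplus (μ : YoungDiagram) : Set ℤ := {i | ∃ x, Addable μ x ∧ content x = i}

/-- `B⁻(μ)`: the set of contents of removable boxes of `μ`. -/
def Bminus (μ : YoungDiagram) : Set ℤ := {i | ∃ x, Removable μ x ∧ content x = i}

/-- `AddBox l i m` means `m = l ⊞ i`, i.e. `m` is obtained from `l` by adding an addable
box of content `i`. -/
def AddBox (l : YoungDiagram) (i : ℤ) (m : YoungDiagram) : Prop :=
  ∃ x, Addable l x ∧ content x = i ∧ m.cells = insert x l.cells

/-- `RemoveBox l i m` means `m = l ⊟ i`, i.e. `m` is obtained from `l` by removing a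
removable box of content `i`. -/
def RemoveBox (l : YoungDiagram) (i : ℤ) (m : YoungDiagram) : Prop :=
  ∃ x, Removable l x ∧ content x = i ∧ m.cells = l.cells.erase x

/-- The hook length `h_μ(r, c)` of a cell of `μ`. -/
def hookLen (μ : YoungDiagram) (x : ℕ × ℕ) : ℕ :=
  (μ.cells.filter (fun y => (y.1 = x.1 ∧ x.2 ≤ y.2) ∨ (y.2 = x.2 ∧ x.1 ≤ y.1))).card

/-- `d_μ = |μ|! / ∏ hook lengths`, the dimension of the irreducible `ℚS_{|μ|}`-module
indexed by `μ` (hook length formula). -/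
def dimPart (μ : YoungDiagram) : ℚ :=
  (Nat.factorial μ.card : ℚ) / ∏ x ∈ μ.cells, (hookLen μ x : ℚ)

namespace HookAux

def cone (a x : ℕ × ℕ) : Prop := (a.1 = x.1 ∧ x.2 ≤ a.2) ∨ (a.2 = x.2 ∧ x.1 ≤ a.1)

instance (a x : ℕ × ℕ) : Decidable (cone a x) := by unfold cone; infer_instance

lemma hook_insert {l m : YoungDiagram} {a : ℕ × ℕ} (ha : a ∉ l.cells)
    (hm : m.cells = insert a l.cells) (x : ℕ × ℕ) :
    hookLen m x = hookLen l x + if cone a x then 1 else 0 := by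
  unfold hookLen
  rw [hm, Finset.filter_insert]
  by_cases h : cone a x
  · have h' : (a.1 = x.1 ∧ x.2 ≤ a.2) ∨ (a.2 = x.2 ∧ x.1 ≤ a.1) := h
    rw [if_pos h', if_pos h, Finset.card_insert_of_notMem fun hc => ha (Finset.mem_of_mem_filter _ hc)]
  · have h' : ¬((a.1 = x.1 ∧ x.2 ≤ a.2) ∨ (a.2 = x.2 ∧ x.1 ≤ a.1)) := h
    rw [if_neg h', if_neg h, Nat.add_zero]

lemma hook_erase {l m : YoungDiagram} {b : ℕ × ℕ} (hb : b ∈ l.cells)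
    (hm : m.cells = l.cells.erase b) (x : ℕ × ℕ) :
    hookLen l x = hookLen m x + if cone b x then 1 else 0 := by
  unfold hookLen
  rw [hm, Finset.filter_erase]
  by_cases h : cone b x
  · rw [if_pos h, Finset.card_erase_of_mem (Finset.mem_filter.2 ⟨hb, h⟩)]
    have : 0 < (Finset.filter (fun y => (y.1 = x.1 ∧ x.2 ≤ y.2) ∨ (y.2 = x.2 ∧ x.1 ≤ y.1)) l.cells).card :=
      Finset.card_pos.2 ⟨b, Finset.mem_filter.2 ⟨hb, h⟩⟩
    omega
  · have hbn : b ∉ Finset.filter (fun y => (y.1 = x.1 ∧ x.2 ≤ y.2) ∨ (y.2 = x.2 ∧ x.1 ≤ y.1)) l.cells :=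
      fun hc => h (Finset.mem_filter.1 hc).2
    rw [if_neg h, Finset.erase_eq_of_notMem hbn, Nat.add_zero]

lemma cone_le {a y : ℕ × ℕ} (h : cone y a) : a ≤ y := by
  rcases h with ⟨h1, h2⟩ | ⟨h1, h2⟩
  · exact ⟨le_of_eq h1.symm, h2⟩
  · exact ⟨h2, le_of_eq h1.symm⟩

lemma hook_add_self {l m : YoungDiagram} {a : ℕ × ℕ} (ha : a ∉ l.cells)
    (hm : m.cells = insert a l.cells) : hookLen m a = 1 := by
  unfold hookLen
  rw [hm]
  have : Finset.filter (fun y => (y.1 = a.1 ∧ a.2 ≤ y.2) ∨ (y.2 = a.2 ∧ a.1 ≤ y.1)) (insert a l.cells) = {a} := by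
    ext y
    simp only [Finset.mem_filter, Finset.mem_insert, Finset.mem_singleton]
    constructor
    · rintro ⟨hy | hy, hc⟩
      · exact hy
      · exact absurd (l.isLowerSet (cone_le hc) hy) ha
    · rintro rfl; exact ⟨Or.inl rfl, Or.inl ⟨rfl, le_refl _⟩⟩
  rw [this, Finset.card_singleton]

lemma hook_rem_self {l : YoungDiagram} {b : ℕ × ℕ} (hb : Removable l b) : hookLen l b = 1 := by
  unfold hookLen
  have : Finset.filter (fun y => (y.1 = b.1 ∧ b.2 ≤ y.2) ∨ (y.2 = b.2 ∧ b.1 ≤ y.1)) l.cells = {b} := by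
    ext y
    simp only [Finset.mem_filter, Finset.mem_singleton]
    constructor
    · rintro ⟨hy, hc⟩
      by_contra hne
      exact absurd (hb.2 (cone_le hc) (Finset.mem_coe.2 (Finset.mem_erase.2 ⟨hne, hy⟩)))
        (by simp)
    · rintro rfl; exact ⟨hb.1, Or.inl ⟨rfl, le_refl _⟩⟩
  rw [this, Finset.card_singleton]

lemma hook_pos {l : YoungDiagram} {x : ℕ × ℕ} (hx : x ∈ l.cells) : 0 < hookLen l x :=
  Finset.card_pos.2 ⟨x, Finset.mem_filter.2 ⟨hx, Or.inl ⟨rfl, le_refl _⟩⟩⟩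

lemma addable_mem {l : YoungDiagram} {a x : ℕ × ℕ} (ha : Addable l a) (hx : x ≤ a) (hne : x ≠ a) :
    x ∈ l.cells := by
  have := ha.2 hx (by simp : a ∈ (↑(insert a l.cells) : Set (ℕ×ℕ)))
  simp only [Finset.coe_insert, Set.mem_insert_iff, Finset.mem_coe] at this
  exact this.resolve_left hne

lemma removable_not_right {l : YoungDiagram} {b : ℕ × ℕ} (hb : Removable l b) :
    (b.1, b.2 + 1) ∉ l.cells := by
  intro h
  have hne : (b.1, b.2+1) ≠ b := by intro hc; exact absurd (congrArg Prod.snd hc) (by simp)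
  have := hb.2 (show b ≤ (b.1, b.2+1) from ⟨le_refl _, Nat.le_succ _⟩)
    (Finset.mem_coe.2 (Finset.mem_erase.2 ⟨hne, h⟩))
  simp at this

lemma removable_not_below {l : YoungDiagram} {b : ℕ × ℕ} (hb : Removable l b) :
    (b.1 + 1, b.2) ∉ l.cells := by
  intro h
  have hne : (b.1+1, b.2) ≠ b := by intro hc; exact absurd (congrArg Prod.fst hc) (by simp)
  have := hb.2 (show b ≤ (b.1+1, b.2) from ⟨Nat.le_succ _, le_refl _⟩)
    (Finset.mem_coe.2 (Finset.mem_erase.2 ⟨hne, h⟩))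
  simp at this

theorem key_prod (E : Finset (ℕ × ℕ)) (f g : ℕ × ℕ → ℕ) (χ : ℕ × ℕ → Prop) [DecidablePred χ]
    (z : ℕ × ℕ) (hz : z ∈ E) (hχz : χ z) (K : ℕ)
    (hfz : f z = K) (hgz : g z + 1 = K)
    (hfg : ∀ x ∈ E, x ≠ z → χ x → g x = f x) :
    (∏ x ∈ E, ((f x : ℚ) + if χ x then 1 else 0)) * (∏ x ∈ E, (g x : ℚ)) * (K : ℚ) ^ 2 =
      (∏ x ∈ E, (f x : ℚ)) * (∏ x ∈ E, ((g x : ℚ) + if χ x then 1 else 0)) * ((K : ℚ) ^ 2 - 1) := by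
  have e1 := Finset.mul_prod_erase E (fun x => ((f x : ℚ) + if χ x then 1 else 0)) hz
  have e2 := Finset.mul_prod_erase E (fun x => (g x : ℚ)) hz
  have e3 := Finset.mul_prod_erase E (fun x => (f x : ℚ)) hz
  have e4 := Finset.mul_prod_erase E (fun x => ((g x : ℚ) + if χ x then 1 else 0)) hz
  rw [← e1, ← e2, ← e3, ← e4]
  have hprod : (∏ x ∈ E.erase z, ((f x : ℚ) + if χ x then 1 else 0)) * (∏ x ∈ E.erase z, (g x : ℚ)) =
      (∏ x ∈ E.erase z, (f x : ℚ)) * (∏ x ∈ E.erase z, ((g x : ℚ) + if χ x then 1 else 0)) := by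
    rw [← Finset.prod_mul_distrib, ← Finset.prod_mul_distrib]
    apply Finset.prod_congr rfl
    intro x hx
    rcases Finset.mem_erase.1 hx with ⟨hne, hxE⟩
    by_cases h : χ x
    · rw [hfg x hxE hne h, if_pos h]; ring
    · rw [if_neg h]; ring
  have hgz' : (g z : ℚ) = (K : ℚ) - 1 := by
    have h2 : (g z : ℚ) + 1 = (K : ℚ) := by exact_mod_cast hgz
    linarith
  rw [if_pos hχz, hfz, hgz']
  linear_combination ((K:ℚ)^2 - 1) * (K:ℚ)^2 * hprod

lemma hook_z_A {l : YoungDiagram} {a b : ℕ × ℕ} (ha : Addable l a) (hb : Removable l b)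
    (h1 : a.1 < b.1) (h2 : b.2 < a.2) :
    hookLen l (a.1, b.2) = (a.2 - b.2) + (b.1 - a.1) := by
  have hanl : a ∉ l.cells := fun h => ha.1 h
  have hS : l.cells.filter (fun y => (y.1 = (a.1, b.2).1 ∧ (a.1, b.2).2 ≤ y.2) ∨
        (y.2 = (a.1, b.2).2 ∧ (a.1, b.2).1 ≤ y.1)) =
      ((Finset.Ico b.2 a.2).image (fun t => (a.1, t))) ∪
        ((Finset.Icc a.1 b.1).image (fun s => (s, b.2))) := by
    ext y
    simp only [Finset.mem_filter, Finset.mem_union, Finset.mem_image, Finset.mem_Ico,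
      Finset.mem_Icc]
    constructor
    · rintro ⟨hy, ⟨hr, hc⟩ | ⟨hr, hc⟩⟩
      · left
        refine ⟨y.2, ⟨hc, ?_⟩, by rw [← hr]⟩
        by_contra hge
        push_neg at hge
        exact hanl (l.up_left_mem hr.ge hge hy)
      · right
        refine ⟨y.1, ⟨hc, ?_⟩, by rw [← hr]⟩
        by_contra hge
        push_neg at hge
        exact removable_not_below hb (l.up_left_mem hge hr.ge hy)
    · rintro (⟨t, ⟨ht1, ht2⟩, rfl⟩ | ⟨s, ⟨hs1, hs2⟩, rfl⟩)
      · refine ⟨addable_mem ha ⟨le_refl _, le_of_lt ht2⟩ ?_, Or.inl ⟨rfl, ht1⟩⟩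
        intro hc
        exact absurd (congrArg Prod.snd hc) (by simp; omega)
      · refine ⟨l.up_left_mem hs2 (le_refl _) hb.1, Or.inr ⟨rfl, hs1⟩⟩
  unfold hookLen
  rw [hS]
  have hinter : ((Finset.Ico b.2 a.2).image (fun t => (a.1, t))) ∩
      ((Finset.Icc a.1 b.1).image (fun s => (s, b.2))) = {(a.1, b.2)} := by
    ext y
    simp only [Finset.mem_inter, Finset.mem_image, Finset.mem_Ico, Finset.mem_Icc,
      Finset.mem_singleton]
    constructor
    · rintro ⟨⟨t, ht, rfl⟩, ⟨s, hs, heq⟩⟩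
      have h1 := congrArg Prod.snd heq
      simp at h1
      simp [h1]
    · rintro rfl
      exact ⟨⟨b.2, ⟨le_refl _, h2⟩, rfl⟩, ⟨a.1, ⟨le_refl _, le_of_lt h1⟩, rfl⟩⟩
  have hcu := Finset.card_union_add_card_inter
    ((Finset.Ico b.2 a.2).image (fun t => (a.1, t)))
    ((Finset.Icc a.1 b.1).image (fun s => (s, b.2)))
  rw [hinter, Finset.card_singleton] at hcu
  rw [Finset.card_image_of_injective _ (fun x y h => by simpa using congrArg Prod.snd h),
    Finset.card_image_of_injective _ (fun x y h => by simpa using congrArg Prod.fst h)] at hcu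
  rw [Nat.card_Ico, Nat.card_Icc] at hcu
  omega

lemma hook_z_B {l : YoungDiagram} {a b : ℕ × ℕ} (ha : Addable l a) (hb : Removable l b)
    (h1 : b.1 < a.1) (h2 : a.2 < b.2) :
    hookLen l (b.1, a.2) = (b.2 - a.2) + (a.1 - b.1) := by
  have hanl : a ∉ l.cells := fun h => ha.1 h
  have hS : l.cells.filter (fun y => (y.1 = (b.1, a.2).1 ∧ (b.1, a.2).2 ≤ y.2) ∨
        (y.2 = (b.1, a.2).2 ∧ (b.1, a.2).1 ≤ y.1)) =
      ((Finset.Icc a.2 b.2).image (fun t => (b.1, t))) ∪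
        ((Finset.Ico b.1 a.1).image (fun s => (s, a.2))) := by
    ext y
    simp only [Finset.mem_filter, Finset.mem_union, Finset.mem_image, Finset.mem_Ico,
      Finset.mem_Icc]
    constructor
    · rintro ⟨hy, ⟨hr, hc⟩ | ⟨hr, hc⟩⟩
      · left
        refine ⟨y.2, ⟨hc, ?_⟩, by rw [← hr]⟩
        by_contra hge
        push_neg at hge
        exact removable_not_right hb (l.up_left_mem hr.ge hge hy)
      · right
        refine ⟨y.1, ⟨hc, ?_⟩, by rw [← hr]⟩
        by_contra hge
        push_neg at hge
        exact hanl (l.up_left_mem hge hr.ge hy)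
    · rintro (⟨t, ⟨ht1, ht2⟩, rfl⟩ | ⟨s, ⟨hs1, hs2⟩, rfl⟩)
      · exact ⟨l.up_left_mem (le_refl _) ht2 hb.1, Or.inl ⟨rfl, ht1⟩⟩
      · refine ⟨addable_mem ha ⟨le_of_lt hs2, le_refl _⟩ ?_, Or.inr ⟨rfl, hs1⟩⟩
        intro hc
        exact absurd (congrArg Prod.fst hc) (by simp; omega)
  unfold hookLen
  rw [hS]
  have hinter : ((Finset.Icc a.2 b.2).image (fun t => (b.1, t))) ∩
      ((Finset.Ico b.1 a.1).image (fun s => (s, a.2))) = {(b.1, a.2)} := by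
    ext y
    simp only [Finset.mem_inter, Finset.mem_image, Finset.mem_Ico, Finset.mem_Icc,
      Finset.mem_singleton]
    constructor
    · rintro ⟨⟨t, ht, rfl⟩, ⟨s, hs, heq⟩⟩
      have h1 := congrArg Prod.snd heq
      simp at h1
      simp [h1]
    · rintro rfl
      exact ⟨⟨a.2, ⟨le_refl _, le_of_lt h2⟩, rfl⟩, ⟨b.1, ⟨le_refl _, h1⟩, rfl⟩⟩
  have hcu := Finset.card_union_add_card_inter
    ((Finset.Icc a.2 b.2).image (fun t => (b.1, t)))
    ((Finset.Ico b.1 a.1).image (fun s => (s, a.2)))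
  rw [hinter, Finset.card_singleton] at hcu
  rw [Finset.card_image_of_injective _ (fun x y h => by simpa using congrArg Prod.snd h),
    Finset.card_image_of_injective _ (fun x y h => by simpa using congrArg Prod.fst h)] at hcu
  rw [Nat.card_Icc, Nat.card_Ico] at hcu
  omega

lemma adj_of_le {l : YoungDiagram} {a b : ℕ × ℕ} (ha : Addable l a) (hb : Removable l b)
    (hba : b ≤ a) (hne : a ≠ b) : a = (b.1, b.2 + 1) ∨ a = (b.1 + 1, b.2) := by
  obtain ⟨hb1, hb2⟩ := hba
  by_cases hlt : b.2 < a.2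
  · left
    by_contra hne2
    have hmem : (b.1, b.2 + 1) ∈ l.cells :=
      addable_mem ha ⟨hb1, hlt⟩ (fun hc => hne2 hc.symm)
    exact removable_not_right hb hmem
  · have ha2 : a.2 = b.2 := by omega
    have hlt1 : b.1 < a.1 := by
      rcases lt_or_eq_of_le hb1 with h | h
      · exact h
      · exact absurd (Prod.ext h.symm ha2) hne
    right
    by_contra hne2
    have hmem : (b.1 + 1, b.2) ∈ l.cells :=
      addable_mem ha ⟨hlt1, ha2.ge⟩ (fun hc => hne2 hc.symm)
    exact removable_not_below hb hmem

lemma prod_hook_insert {l m : YoungDiagram} {a : ℕ × ℕ} (ha : a ∉ l.cells)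
    (hm : m.cells = insert a l.cells) :
    ∏ x ∈ m.cells, (hookLen m x : ℚ) =
      ∏ x ∈ l.cells, ((hookLen l x : ℚ) + if cone a x then 1 else 0) := by
  rw [hm, Finset.prod_insert ha, hook_add_self ha hm]
  rw [Nat.cast_one, one_mul]
  apply Finset.prod_congr rfl
  intro x _
  rw [hook_insert ha hm x]
  push_cast
  by_cases h : cone a x
  · simp [h]
  · simp [h]

end HookAux


namespace HookAux

lemma no_removable_content {l mi : YoungDiagram} {a b : ℕ × ℕ}
    (ha : Addable l a) (hb : Removable l b) (hmiC : mi.cells = insert a l.cells)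
    (hba : b ≤ a) (hne : a ≠ b) : content b ∉ Bminus mi := by
  rintro ⟨x, hx, hcx⟩
  have hanl : a ∉ l.cells := fun h => ha.1 h
  have hca : content a ≠ content b := by
    rcases adj_of_le ha hb hba hne with h | h <;> rw [h] <;> unfold content <;>
      simp <;> omega
  have hxa : x ≠ a := fun h => hca (h ▸ hcx)
  have hxl : x ∈ l.cells := by
    have hxx : x ∈ mi.cells := hx.1
    rw [hmiC] at hxx
    exact (Finset.mem_insert.1 hxx).resolve_left hxa
  by_cases hxb : x = b
  · subst hxb
    have hamem : a ∈ mi.cells.erase x := by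
      rw [hmiC]
      exact Finset.mem_erase.2 ⟨hne, Finset.mem_insert_self _ _⟩
    have := hx.2 hba (Finset.mem_coe.2 hamem)
    simp at this
  · unfold content at hcx
    have hx1 : x.1 ≠ b.1 := by
      intro h
      exact hxb (Prod.ext h (by omega))
    rcases Nat.lt_or_ge b.1 x.1 with h | h
    · have hx2 : b.2 < x.2 := by omega
      exact removable_not_right hb (l.up_left_mem (le_of_lt h) (by omega) hxl)
    · have h' : x.1 < b.1 := by omega
      have hx2 : x.2 + 1 ≤ b.2 := by omega
      have hbmem : b ∈ mi.cells := by rw [hmiC]; exact Finset.mem_insert_of_mem hb.1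
      exact removable_not_right hx (mi.up_left_mem (le_of_lt h') hx2 hbmem)

lemma rem_mi {l mi : YoungDiagram} {a b : ℕ × ℕ}
    (hb : Removable l b) (hmiC : mi.cells = insert a l.cells) (hnba : ¬ b ≤ a) :
    Removable mi b := by
  constructor
  · show b ∈ mi.cells
    rw [hmiC]; exact Finset.mem_insert_of_mem hb.1
  · intro p q hqp hp
    simp only [Finset.coe_erase, Set.mem_diff, Finset.mem_coe, Set.mem_singleton_iff] at hp ⊢
    obtain ⟨hp1, hp2⟩ := hp
    refine ⟨mi.isLowerSet hqp hp1, ?_⟩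
    intro hqb
    subst hqb
    rw [hmiC] at hp1
    rcases Finset.mem_insert.1 hp1 with h | h
    · exact hnba (h ▸ hqp)
    · have := hb.2 hqp (Finset.mem_coe.2 (Finset.mem_erase.2 ⟨hp2, h⟩))
      simp at this

lemma endgame {l mi mj m' : YoungDiagram} {a b z : ℕ × ℕ} {K : ℕ}
    (hbR : Removable l b) (hanl : a ∉ l.cells)
    (hmiC : mi.cells = insert a l.cells) (hmjC : mj.cells = l.cells.erase b)
    (hm'C : m'.cells = mi.cells.erase b)
    (hconeab : ¬ cone a b)
    (hzE : z ∈ l.cells) (hzb : z ≠ b) (hχz : cone a z) (hbz : cone b z)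
    (huniq : ∀ x, cone a x → cone b x → x = z)
    (hfz : hookLen l z = K) :
    (∏ x ∈ mi.cells, (hookLen mi x : ℚ)) * (∏ x ∈ mj.cells, (hookLen mj x : ℚ)) * (K:ℚ)^2 =
      (∏ x ∈ l.cells, (hookLen l x : ℚ)) * (∏ x ∈ m'.cells, (hookLen m' x : ℚ)) * ((K:ℚ)^2 - 1) := by
  have hbl : b ∈ l.cells := hbR.1
  have hgf : ∀ x, hookLen l x = hookLen mj x + if cone b x then 1 else 0 :=
    hook_erase hbl hmjC
  have hPl : ∏ x ∈ l.cells, (hookLen l x : ℚ) =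
      ∏ x ∈ l.cells.erase b, (hookLen l x : ℚ) := by
    rw [← Finset.mul_prod_erase l.cells _ hbl, hook_rem_self hbR]
    simp
  have hPmi : ∏ x ∈ mi.cells, (hookLen mi x : ℚ) =
      ∏ x ∈ l.cells.erase b, ((hookLen l x : ℚ) + if cone a x then 1 else 0) := by
    rw [prod_hook_insert hanl hmiC, ← Finset.mul_prod_erase l.cells _ hbl,
      hook_rem_self hbR, if_neg hconeab]
    simp
  have haE : a ∉ mj.cells := by
    rw [hmjC]; exact fun h => hanl (Finset.mem_of_mem_erase h)
  have hm'C2 : m'.cells = insert a mj.cells := by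
    rw [hm'C, hmiC, hmjC]
    have hne : a ≠ b := fun h => hanl (h ▸ hbl)
    rw [Finset.erase_insert_of_ne hne]
  have hPm' : ∏ x ∈ m'.cells, (hookLen m' x : ℚ) =
      ∏ x ∈ l.cells.erase b, ((hookLen mj x : ℚ) + if cone a x then 1 else 0) := by
    rw [prod_hook_insert haE hm'C2, hmjC]
  rw [hPl, hPmi, hPm', hmjC]
  apply key_prod (l.cells.erase b) (hookLen l) (hookLen mj) (cone a) z
    (Finset.mem_erase.2 ⟨hzb, hzE⟩) hχz K hfz
  · rw [← hfz, hgf z, if_pos hbz]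
  · intro x hx hne hχx
    have hnb : ¬ cone b x := fun hc => hne (huniq x hχx hc)
    rw [hgf x, if_neg hnb]
    simp

end HookAux



open HookAux

/-- For a nonempty Young diagram `λ`, `j ∈ B⁻(λ)` and `i ∈ B⁺(λ)`, with
`D = d_{(λ⊞i)⊟j}` if `j ∈ B⁻(λ⊞i)` and `D = 0` otherwise:
`(1/(i−j)²)·(|λ|·d_{λ⊞i}·d_{λ⊟j})/((|λ|+1)·d_λ)
    = (|λ|·d_{λ⊞i}·d_{λ⊟j})/((|λ|+1)·d_λ) − D`. -/
theorem hook_identity_mixed (l : YoungDiagram) (hl : 0 < l.card) (i j : ℤ)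
    (hi : i ∈ Bplus l) (hj : j ∈ Bminus l)
    (mi mj : YoungDiagram) (hmi : AddBox l i mi) (hmj : RemoveBox l j mj)
    (Dv : ℚ)
    (hD1 : ∀ m : YoungDiagram, RemoveBox mi j m → Dv = dimPart m)
    (hD2 : j ∉ Bminus mi → Dv = 0) :
    (1 / ((i : ℚ) - (j : ℚ)) ^ 2) *
        ((l.card : ℚ) * dimPart mi * dimPart mj) / (((l.card : ℚ) + 1) * dimPart l) =
      ((l.card : ℚ) * dimPart mi * dimPart mj) / (((l.card : ℚ) + 1) * dimPart l) -
        Dv := by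
  classical
  obtain ⟨a, haA, hca, hmiC⟩ := hmi
  obtain ⟨b, hbR, hcb, hmjC⟩ := hmj
  have hanl : a ∉ l.cells := fun h => haA.1 h
  have hbl : b ∈ l.cells := hbR.1
  have habne : a ≠ b := fun h => hanl (h ▸ hbl)
  by_cases hba : b ≤ a
  · -- adjacent case
    have hD : Dv = 0 := hD2 (by
      rw [← hcb]; exact no_removable_content haA hbR hmiC hba habne)
    have hij : i - j = 1 ∨ i - j = -1 := by
      rcases adj_of_le haA hbR hba habne with h | h
      · left; rw [← hca, ← hcb, h]; unfold content; push_cast; ring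
      · right; rw [← hca, ← hcb, h]; unfold content; push_cast; ring
    have hq : ((i : ℚ) - (j : ℚ)) ^ 2 = 1 := by
      have hcast : ((i - j : ℤ) : ℚ) = (i : ℚ) - j := by push_cast; ring
      rcases hij with h | h <;> (rw [← hcast, h]; norm_num)
    rw [hD, hq]
    norm_num
  · -- main case
    have hnab : ¬ a ≤ b :=
      fun h => hanl (Finset.mem_coe.1 (l.isLowerSet h (Finset.mem_coe.2 hbl)))
    have hcoord : (a.1 < b.1 ∧ b.2 < a.2) ∨ (b.1 < a.1 ∧ a.2 < b.2) := by
      rw [Prod.le_def, not_and_or, not_le, not_le] at hba hnab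
      omega
    have hremi : Removable mi b := rem_mi hbR hmiC hba
    set m' : YoungDiagram := ⟨mi.cells.erase b, hremi.2⟩ with hm'def
    have hDv : Dv = dimPart m' := hD1 m' ⟨b, hremi, hcb, rfl⟩
    clear hba hnab
    have hconeab : ¬ cone a b := by
      unfold cone
      rcases hcoord with ⟨h1, h2⟩ | ⟨h1, h2⟩ <;> omega
    obtain ⟨z, K, hzE, hzb, hχz, hbz, huniq, hfz, hKij⟩ :
        ∃ (z : ℕ × ℕ) (K : ℕ), z ∈ l.cells ∧ z ≠ b ∧ cone a z ∧ cone b z ∧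
          (∀ x, cone a x → cone b x → x = z) ∧ hookLen l z = K ∧
          ((i : ℚ) - (j : ℚ)) ^ 2 = (K : ℚ) ^ 2 := by
      rcases hcoord with ⟨h1, h2⟩ | ⟨h1, h2⟩
      · refine ⟨(a.1, b.2), (a.2 - b.2) + (b.1 - a.1), l.up_left_mem (le_of_lt h1) (le_refl _) hbl,
          fun h => by rw [← h] at h1; exact lt_irrefl _ h1,
          Or.inl ⟨rfl, le_of_lt h2⟩, Or.inr ⟨rfl, le_of_lt h1⟩, ?_,
          hook_z_A haA hbR h1 h2, ?_⟩
        · intro x hax hbx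
          unfold cone at hax hbx
          have hx : x.1 = a.1 ∧ x.2 = b.2 := by omega
          exact Prod.ext hx.1 hx.2
        · have hZ : ((a.2 - b.2 + (b.1 - a.1) : ℕ) : ℤ) = i - j := by
            rw [← hca, ← hcb]; unfold content; omega
          have h4 : ((a.2 - b.2 + (b.1 - a.1) : ℕ) : ℚ) = (i : ℚ) - j := by
            exact_mod_cast hZ
          rw [← h4]
      · refine ⟨(b.1, a.2), (b.2 - a.2) + (a.1 - b.1), l.up_left_mem (le_refl _) (le_of_lt h2) hbl,
          fun h => by rw [← h] at h2; exact lt_irrefl _ h2,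
          Or.inr ⟨rfl, le_of_lt h1⟩, Or.inl ⟨rfl, le_of_lt h2⟩, ?_,
          hook_z_B haA hbR h1 h2, ?_⟩
        · intro x hax hbx
          unfold cone at hax hbx
          have hx : x.1 = b.1 ∧ x.2 = a.2 := by omega
          exact Prod.ext hx.1 hx.2
        · have hZ : ((b.2 - a.2 + (a.1 - b.1) : ℕ) : ℤ) = j - i := by
            rw [← hca, ← hcb]; unfold content; omega
          have h4 : ((b.2 - a.2 + (a.1 - b.1) : ℕ) : ℚ) = (j : ℚ) - i := by
            exact_mod_cast hZ
          have h3 : (i : ℚ) - j = -((b.2 - a.2 + (a.1 - b.1) : ℕ) : ℚ) := by linarith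
          rw [h3]; ring
    have hKey := endgame hbR hanl hmiC hmjC rfl hconeab hzE hzb hχz hbz huniq hfz
      (mj := mj) (m' := m')
    have hK0 : 0 < K := hfz ▸ hook_pos hzE
    have hKQ : (K : ℚ) ≠ 0 := Nat.cast_ne_zero.2 hK0.ne'
    -- cardinalities
    have hcmi : mi.card = l.card + 1 := by
      show mi.cells.card = l.cells.card + 1
      rw [hmiC, Finset.card_insert_of_notMem hanl]
    have hcmj : mj.card + 1 = l.card := by
      show mj.cells.card + 1 = l.cells.card
      rw [hmjC, Finset.card_erase_of_mem hbl]
      have : 0 < l.cells.card := hl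
      omega
    have hcm' : m'.card = l.card := by
      show (mi.cells.erase b).card = l.cells.card
      rw [Finset.card_erase_of_mem hremi.1]
      have h9 : mi.cells.card = l.cells.card + 1 := hcmi
      omega
    set PL := ∏ x ∈ l.cells, (hookLen l x : ℚ) with hPLdef
    set PI := ∏ x ∈ mi.cells, (hookLen mi x : ℚ) with hPIdef
    set PJ := ∏ x ∈ mj.cells, (hookLen mj x : ℚ) with hPJdef
    set PM := ∏ x ∈ m'.cells, (hookLen m' x : ℚ) with hPMdef
    have hPL0 : PL ≠ 0 := Finset.prod_ne_zero_iff.2 fun x hx =>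
      Nat.cast_ne_zero.2 (hook_pos hx).ne'
    have hPI0 : PI ≠ 0 := Finset.prod_ne_zero_iff.2 fun x hx =>
      Nat.cast_ne_zero.2 (hook_pos hx).ne'
    have hPJ0 : PJ ≠ 0 := Finset.prod_ne_zero_iff.2 fun x hx =>
      Nat.cast_ne_zero.2 (hook_pos hx).ne'
    have hPM0 : PM ≠ 0 := Finset.prod_ne_zero_iff.2 fun x hx =>
      Nat.cast_ne_zero.2 (hook_pos hx).ne'
    have hfacI : ((mi.card).factorial : ℚ) = ((l.card : ℚ) + 1) * (l.card).factorial := by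
      rw [hcmi, Nat.factorial_succ]; push_cast; ring
    have hfacL : ((l.card).factorial : ℚ) = (l.card : ℚ) * (mj.card).factorial := by
      rw [← hcmj, Nat.factorial_succ]; push_cast; ring
    have hcard0 : ((l.card : ℚ)) ≠ 0 := Nat.cast_ne_zero.2 hl.ne'
    have hcard1 : ((l.card : ℚ)) + 1 ≠ 0 := by positivity
    have hX : ((l.card : ℚ) * dimPart mi * dimPart mj) / (((l.card : ℚ) + 1) * dimPart l) =
        ((l.card).factorial : ℚ) * PL / (PI * PJ) := by
      unfold dimPart
      rw [← hPLdef, ← hPIdef, ← hPJdef, hfacI, hfacL]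
      have hfacL0 : ((l.card).factorial : ℚ) ≠ 0 := Nat.cast_ne_zero.2 (Nat.factorial_ne_zero _)
      field_simp
    rw [hDv, hKij, mul_div_assoc, hX]
    unfold dimPart
    rw [← hPMdef, hcm']
    have hfacL0 : ((l.card).factorial : ℚ) ≠ 0 := Nat.cast_ne_zero.2 (Nat.factorial_ne_zero _)
    field_simp
    linear_combination hKey
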